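/- Let y be a computable infinite binary sequence with infinitely many 1's. If x is Martin-Löf random with respect to the uniform measure λ, then x/y is Martin-Löf random with respect to λ. -/

import Mathlib

open MeasureTheory Filter
open scoped ENNReal

/-- Cylinder set `Δ(s)` of infinite binary sequences extending the finite string `s`. -/
def cyl (s : List Bool) : Set (ℕ → Bool) := {x | ∀ i < s.length, x i = s.getD i false}

/-- The first `n` bits `y_1^n` of an infinite sequence `y`. -/
def pref (y : ℕ → Bool) (n : ℕ) : List Bool := List.ofFn (fun i : Fin n => y i)

/-- `tau y j` is the (0-indexed) position of the `(j+1)`-st `1` in `y`. -/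
noncomputable def tau (y : ℕ → Bool) (j : ℕ) : ℕ := Nat.nth (fun i => y i = true) j

/-- The selected subsequence `x/y` of `x` at positions where `y` is `1`. -/
noncomputable def selSeq (x y : ℕ → Bool) : ℕ → Bool := fun j => x (tau y j)

/-- The `n`-th level of a set `U ⊆ ℕ × strings`, as a set of sequences. -/
def lvl (U : Set (ℕ × List Bool)) (n : ℕ) : Set (ℕ → Bool) :=
  ⋃ s ∈ {s : List Bool | (n, s) ∈ U}, cyl s

/-- `A` is recursively enumerable (as a set of pairs). -/
def REset (A : Set (ℕ × List Bool)) : Prop :=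
  ∃ f : ℕ × List Bool →. Unit, Partrec f ∧ ∀ a, a ∈ A ↔ (f a).Dom

/-- Martin-Löf test with respect to the measure `P`. -/
def MLTest (P : Measure (ℕ → Bool)) (U : Set (ℕ × List Bool)) : Prop :=
  REset U ∧ (∀ n, lvl U (n + 1) ⊆ lvl U n) ∧ ∀ n, P (lvl U n) < (2 : ℝ≥0∞)⁻¹ ^ n

/-- `y` is Martin-Löf random with respect to `P`: it passes every ML test. -/
def MLRandom (P : Measure (ℕ → Bool)) (y : ℕ → Bool) : Prop :=
  ∀ U : Set (ℕ × List Bool), MLTest P U → ∃ n, y ∉ lvl U n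

/-- `P` is a computable probability measure. -/
def ComputableMeasure (P : Measure (ℕ → Bool)) : Prop :=
  ∃ A : List Bool → ℕ → ℚ, Computable₂ A ∧
    ∀ s k, |(P (cyl s)).toReal - (A s k : ℝ)| < 1 / (k + 1)

namespace SelectionAux

/-! ### Cylinder sets and the product σ-algebra -/

/-- The collection of all cylinder sets. -/
def cylC : Set (Set (ℕ → Bool)) := {S | ∃ s : List Bool, S = cyl s}

lemma getD_ofFn {n : ℕ} (u : Fin n → Bool) {i : ℕ} (h : i < n) :
    (List.ofFn u).getD i false = u ⟨i, h⟩ := by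
  rw [List.getD_eq_getElem _ _ (by simpa using h)]
  simp

lemma self_mem_cyl_ofFn (x : ℕ → Bool) (n : ℕ) :
    x ∈ cyl (List.ofFn (fun i : Fin n => x i)) := by
  intro i hi
  rw [List.length_ofFn] at hi
  rw [getD_ofFn _ hi]

lemma measurableSet_coord (m : ℕ) (c : Bool) : MeasurableSet {x : ℕ → Bool | x m = c} := by
  have h : {x : ℕ → Bool | x m = c} = (fun x : ℕ → Bool => x m) ⁻¹' {c} := rfl
  rw [h]
  exact measurable_pi_apply m (measurableSet_singleton c)

lemma measurableSet_cyl (s : List Bool) : MeasurableSet (cyl s) := by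
  have h : cyl s = ⋂ i : Fin s.length, {x : ℕ → Bool | x (i : ℕ) = s.getD i false} := by
    ext x
    simp only [cyl, Set.mem_setOf_eq, Set.mem_iInter]
    constructor
    · intro hx i
      exact hx i i.2
    · intro hx i hi
      exact hx ⟨i, hi⟩
  rw [h]
  exact MeasurableSet.iInter fun i => measurableSet_coord _ _

lemma cyl_inter_of_le {s t : List Bool} (h : s.length ≤ t.length)
    (hne : (cyl s ∩ cyl t).Nonempty) : cyl s ∩ cyl t = cyl t := by
  obtain ⟨w, hws, hwt⟩ := hne
  apply Set.inter_eq_self_of_subset_right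
  intro x hx i hi
  rw [hx i (lt_of_lt_of_le hi h), ← hwt i (lt_of_lt_of_le hi h), hws i hi]

lemma isPiSystem_cylC : IsPiSystem cylC := by
  rintro S ⟨s, rfl⟩ T ⟨t, rfl⟩ hne
  rcases le_total s.length t.length with h | h
  · exact ⟨t, cyl_inter_of_le h hne⟩
  · refine ⟨s, ?_⟩
    rw [Set.inter_comm]
    exact cyl_inter_of_le h (by rwa [Set.inter_comm] at hne)

lemma coord_eq_iUnion (m : ℕ) (c : Bool) :
    {x : ℕ → Bool | x m = c} =
      ⋃ (u : Fin (m + 1) → Bool) (_ : u ⟨m, Nat.lt_succ_self m⟩ = c), cyl (List.ofFn u) := by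
  ext x
  simp only [Set.mem_setOf_eq, Set.mem_iUnion]
  constructor
  · intro hx
    refine ⟨fun j => x j, hx, ?_⟩
    exact self_mem_cyl_ofFn x (m + 1)
  · rintro ⟨u, hu, hxu⟩
    have := hxu m (by simp)
    rw [getD_ofFn u (Nat.lt_succ_self m)] at this
    rw [this, hu]

lemma generateFrom_cylC :
    (inferInstance : MeasurableSpace (ℕ → Bool)) = MeasurableSpace.generateFrom cylC := by
  apply le_antisymm
  · have hev : ∀ m : ℕ, @Measurable _ _ (MeasurableSpace.generateFrom cylC) _
        (fun x : ℕ → Bool => x m) := by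
      intro m
      refine @measurable_to_countable' Bool (ℕ → Bool) _ _
        (MeasurableSpace.generateFrom cylC) (fun x : ℕ → Bool => x m) fun c => ?_

      have h : ((fun x : ℕ → Bool => x m) ⁻¹' {c}) = {x : ℕ → Bool | x m = c} := rfl
      rw [h, coord_eq_iUnion m c]
      exact MeasurableSet.iUnion fun u => MeasurableSet.iUnion fun _ =>
        MeasurableSpace.measurableSet_generateFrom ⟨_, rfl⟩
    refine iSup_le fun m => ?_
    exact measurable_iff_comap_le.mp (hev m)
  · exact MeasurableSpace.generateFrom_le (by rintro S ⟨s, rfl⟩; exact measurableSet_cyl s)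

lemma measure_eq_of_cyl (P Q : Measure (ℕ → Bool)) [IsProbabilityMeasure P]
    [IsProbabilityMeasure Q] (h : ∀ s, P (cyl s) = Q (cyl s)) : P = Q := by
  refine ext_of_generate_finite cylC generateFrom_cylC isPiSystem_cylC ?_ ?_
  · rintro S ⟨s, rfl⟩
    exact h s
  · simp

/-! ### Bit flips preserve the uniform measure -/

/-- Flip the `m`-th coordinate. -/
def flipAt (m : ℕ) (x : ℕ → Bool) : ℕ → Bool := fun i => if i = m then !(x i) else x i

lemma measurable_flipAt (m : ℕ) : Measurable (flipAt m) := by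
  apply measurable_pi_lambda
  intro i
  by_cases h : i = m
  · simp only [flipAt, h, if_pos rfl]
    exact (measurable_of_countable (fun b : Bool => !b)).comp (measurable_pi_apply m)
  · simp only [flipAt, if_neg h]
    exact measurable_pi_apply i

lemma flipAt_preimage_cyl (m : ℕ) (s : List Bool) :
    flipAt m ⁻¹' cyl s = cyl (s.set m (!(s.getD m false))) := by
  have hgetD : ∀ i < s.length, (s.set m (!(s.getD m false))).getD i false =
      if i = m then !(s.getD i false) else s.getD i false := by
    intro i hi
    by_cases him : i = m
    · subst him
      rw [if_pos rfl, List.getD_eq_getElem _ _ (by simpa using hi),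
        List.getElem_set_self (by simpa using hi), List.getD_eq_getElem _ _ hi]
    · rw [if_neg him, List.getD_eq_getElem _ _ (by simpa using hi),
        List.getElem_set_ne (fun hh => him hh.symm), List.getD_eq_getElem _ _ hi]
  ext x
  simp only [Set.mem_preimage, cyl, Set.mem_setOf_eq, List.length_set]
  constructor
  · intro hx i hi
    rw [hgetD i hi]
    have hthis := hx i hi
    by_cases him : i = m
    · subst him
      have hred : flipAt i x i = !(x i) := by simp [flipAt]
      rw [hred] at hthis
      rw [if_pos rfl, ← hthis, Bool.not_not]
    · have hred : flipAt m x i = x i := by simp [flipAt, him]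
      rw [hred] at hthis
      rw [if_neg him]
      exact hthis
  · intro hx i hi
    have hthis := hx i hi
    rw [hgetD i hi] at hthis
    by_cases him : i = m
    · subst him
      have hred : flipAt i x i = !(x i) := by simp [flipAt]
      rw [if_pos rfl] at hthis
      rw [hred, hthis, Bool.not_not]
    · have hred : flipAt m x i = x i := by simp [flipAt, him]
      rw [if_neg him] at hthis
      rw [hred]
      exact hthis

lemma map_flipAt (lam : Measure (ℕ → Bool)) [IsProbabilityMeasure lam]
    (hlam : ∀ s : List Bool, lam (cyl s) = (2 : ℝ≥0∞)⁻¹ ^ s.length) (m : ℕ) :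
    Measure.map (flipAt m) lam = lam := by
  have : IsProbabilityMeasure (Measure.map (flipAt m) lam) :=
    Measure.isProbabilityMeasure_map (measurable_flipAt m).aemeasurable
  apply measure_eq_of_cyl
  intro s
  rw [Measure.map_apply (measurable_flipAt m) (measurableSet_cyl s),
    flipAt_preimage_cyl, hlam, hlam, List.length_set]

/-! ### Measures of constraint sets -/

/-- The set of sequences whose values at positions `τ 0, …, τ (k-1)` are prescribed by `b`. -/
def constr (τ : ℕ → ℕ) (b : ℕ → Bool) (k : ℕ) : Set (ℕ → Bool) :=
  {x | ∀ j < k, x (τ j) = b j}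

lemma measurableSet_constr (τ : ℕ → ℕ) (b : ℕ → Bool) (k : ℕ) :
    MeasurableSet (constr τ b k) := by
  have h : constr τ b k = ⋂ j : Fin k, {x : ℕ → Bool | x (τ j) = b j} := by
    ext x
    simp only [constr, Set.mem_setOf_eq, Set.mem_iInter]
    constructor
    · intro hx j
      exact hx j j.2
    · intro hx j hj
      exact hx ⟨j, hj⟩
  rw [h]
  exact MeasurableSet.iInter fun j => measurableSet_coord _ _

lemma bool_not_eq_comm {a b : Bool} : (!a) = b ↔ a = (!b) := by
  cases a <;> cases b <;> decide

lemma bool_ne_not_self (a : Bool) : a ≠ !a := by cases a <;> decide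

lemma bool_eq_not_of_ne {a b : Bool} (h : a ≠ b) : a = !b := by
  cases a <;> cases b <;> simp_all

lemma lam_constr (lam : Measure (ℕ → Bool)) [IsProbabilityMeasure lam]
    (hlam : ∀ s : List Bool, lam (cyl s) = (2 : ℝ≥0∞)⁻¹ ^ s.length)
    {τ : ℕ → ℕ} (hτ : Function.Injective τ) (b : ℕ → Bool) :
    ∀ k, lam (constr τ b k) = (2 : ℝ≥0∞)⁻¹ ^ k := by
  intro k
  induction k with
  | zero =>
    have h0 : constr τ b 0 = Set.univ :=
      Set.eq_univ_of_forall (fun x j hj => absurd hj (Nat.not_lt_zero j))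
    rw [h0, measure_univ, pow_zero]
  | succ k ih =>
    have hBeq : constr τ b (k + 1) = constr τ b k ∩ {x : ℕ → Bool | x (τ k) = b k} := by
      ext x
      simp only [constr, Set.mem_inter_iff, Set.mem_setOf_eq]
      constructor
      · intro hx
        exact ⟨fun j hj => hx j (hj.trans (Nat.lt_succ_self k)), hx k (Nat.lt_succ_self k)⟩
      · rintro ⟨h1, h2⟩ j hj
        rcases Nat.lt_succ_iff_lt_or_eq.mp hj with hj' | rfl
        · exact h1 j hj'
        · exact h2
    have hmeasB : MeasurableSet (constr τ b (k + 1)) := measurableSet_constr _ _ _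
    have hmeasB' : MeasurableSet (constr τ b k ∩ {x : ℕ → Bool | x (τ k) = !(b k)}) :=
      (measurableSet_constr _ _ _).inter (measurableSet_coord _ _)
    have hpre : flipAt (τ k) ⁻¹' constr τ b (k + 1) =
        constr τ b k ∩ {x : ℕ → Bool | x (τ k) = !(b k)} := by
      ext x
      have hfix : ∀ j < k, flipAt (τ k) x (τ j) = x (τ j) := by
        intro j hj
        have hne : τ j ≠ τ k := fun hc => (Nat.lt_irrefl k) (hτ hc ▸ hj)
        simp [flipAt, hne]
      have hflip : flipAt (τ k) x (τ k) = !(x (τ k)) := by simp [flipAt]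
      simp only [Set.mem_preimage, Set.mem_inter_iff, Set.mem_setOf_eq, constr]
      constructor
      · intro hmem
        have h2 : flipAt (τ k) x (τ k) = b k := hmem k (Nat.lt_succ_self k)
        rw [hflip, bool_not_eq_comm] at h2
        refine ⟨fun j hj => ?_, h2⟩
        have := hmem j (hj.trans (Nat.lt_succ_self k))
        rwa [hfix j hj] at this
      · rintro ⟨h1, h2⟩ j hj
        rcases Nat.lt_succ_iff_lt_or_eq.mp hj with hj' | rfl
        · rw [hfix j hj']
          exact h1 j hj'
        · rw [hflip, bool_not_eq_comm]
          exact h2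
    have hBB' : lam (constr τ b k ∩ {x : ℕ → Bool | x (τ k) = !(b k)}) =
        lam (constr τ b (k + 1)) := by
      rw [← hpre, ← Measure.map_apply (measurable_flipAt (τ k)) hmeasB,
        map_flipAt lam hlam (τ k)]
    have hdisj : Disjoint (constr τ b (k + 1))
        (constr τ b k ∩ {x : ℕ → Bool | x (τ k) = !(b k)}) := by
      rw [Set.disjoint_left]
      rintro x hx1 ⟨_, hx2⟩
      rw [hBeq] at hx1
      have h1 := hx1.2
      simp only [Set.mem_setOf_eq] at h1 hx2
      rw [h1] at hx2
      exact bool_ne_not_self (b k) hx2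
    have hunion : constr τ b k = constr τ b (k + 1) ∪
        (constr τ b k ∩ {x : ℕ → Bool | x (τ k) = !(b k)}) := by
      ext x
      simp only [Set.mem_union, Set.mem_inter_iff, Set.mem_setOf_eq]
      constructor
      · intro hxA
        by_cases hc : x (τ k) = b k
        · left
          rw [hBeq]
          exact ⟨hxA, hc⟩
        · right
          exact ⟨hxA, bool_eq_not_of_ne hc⟩
      · rintro (hxB | ⟨hxA, _⟩)
        · rw [hBeq] at hxB
          exact hxB.1
        · exact hxA
    have hsum : lam (constr τ b (k + 1)) + lam (constr τ b (k + 1)) = (2 : ℝ≥0∞)⁻¹ ^ k := by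
      conv_rhs => rw [← ih]
      rw [hunion, measure_union hdisj hmeasB', hBB']
    have h2 : (2 : ℝ≥0∞) * lam (constr τ b (k + 1)) =
        (2 : ℝ≥0∞) * (2 : ℝ≥0∞)⁻¹ ^ (k + 1) := by
      rw [two_mul, hsum, pow_succ, mul_comm ((2 : ℝ≥0∞)⁻¹ ^ k), ← mul_assoc,
        ENNReal.mul_inv_cancel two_ne_zero ENNReal.ofNat_ne_top, one_mul]
    exact (ENNReal.mul_right_inj two_ne_zero ENNReal.ofNat_ne_top).mp h2

/-! ### The selection map preserves the measure -/

lemma measurable_sel (y : ℕ → Bool) : Measurable (fun x => selSeq x y) :=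
  measurable_pi_lambda _ fun j => measurable_pi_apply (tau y j)

lemma sel_preimage_cyl (y : ℕ → Bool) (s : List Bool) :
    (fun x => selSeq x y) ⁻¹' cyl s = constr (tau y) (fun j => s.getD j false) s.length := rfl

lemma map_sel (lam : Measure (ℕ → Bool)) [IsProbabilityMeasure lam]
    (hlam : ∀ s : List Bool, lam (cyl s) = (2 : ℝ≥0∞)⁻¹ ^ s.length)
    (y : ℕ → Bool) (hy : {i | y i = true}.Infinite) :
    Measure.map (fun x => selSeq x y) lam = lam := by
  have hτ : Function.Injective (tau y) := (Nat.nth_strictMono hy).injective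
  have : IsProbabilityMeasure (Measure.map (fun x => selSeq x y) lam) :=
    Measure.isProbabilityMeasure_map (measurable_sel y).aemeasurable
  apply measure_eq_of_cyl
  intro s
  rw [Measure.map_apply (measurable_sel y) (measurableSet_cyl s), sel_preimage_cyl,
    lam_constr lam hlam hτ, hlam]

/-! ### The extraction function and its properties -/

/-- Extract from a finite string `t` the bits at positions `< |t|` where `y` is `1`. -/
def extFn (y : ℕ → Bool) (t : List Bool) : List Bool :=
  (List.range t.length).filterMap fun i => if y i = true then some (t.getD i false) else none

lemma filterMap_range_length (y : ℕ → Bool) (g : ℕ → Bool) (N : ℕ) :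
    ((List.range N).filterMap fun i => if y i = true then some (g i) else none).length =
      Nat.count (fun i => y i = true) N := by
  induction N with
  | zero => simp
  | succ N ih =>
    rw [List.range_succ, List.filterMap_append, List.length_append, ih, Nat.count_succ]
    by_cases h : y N = true <;> simp [h]

lemma filterMap_range_getD (y : ℕ → Bool) (g : ℕ → Bool) (N : ℕ) :
    ∀ j < Nat.count (fun i => y i = true) N,
      ((List.range N).filterMap fun i => if y i = true then some (g i) else none).getD j false =
        g (Nat.nth (fun i => y i = true) j) := by
  induction N with
  | zero => simp
  | succ N ih =>
    intro j hj
    rw [List.range_succ, List.filterMap_append]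
    by_cases h : y N = true
    · rw [Nat.count_succ, if_pos h] at hj
      rcases Nat.lt_succ_iff_lt_or_eq.mp hj with hj' | rfl
      · rw [List.getD_append _ _ _ _ (by rw [filterMap_range_length]; exact hj')]
        exact ih j hj'
      · rw [List.getD_append_right _ _ _ _ (by rw [filterMap_range_length])]
        rw [filterMap_range_length, Nat.sub_self]
        simp only [List.filterMap_cons, if_pos h, List.filterMap_nil]
        rw [Nat.nth_count h]
        simp
    · rw [Nat.count_succ, if_neg h] at hj
      simp only [List.filterMap_cons, if_neg h, List.filterMap_nil, List.append_nil]
      exact ih j hj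

lemma extFn_length (y : ℕ → Bool) (t : List Bool) :
    (extFn y t).length = Nat.count (fun i => y i = true) t.length :=
  filterMap_range_length y _ _

lemma extFn_getD (y : ℕ → Bool) (t : List Bool) {j : ℕ}
    (hj : j < Nat.count (fun i => y i = true) t.length) :
    (extFn y t).getD j false = t.getD (Nat.nth (fun i => y i = true) j) false :=
  filterMap_range_getD y _ _ j hj

/-! ### Computability of the extraction function -/

/-- The prefix of `y` of length `n`, as a recursive function. -/
def prefYFn (y : ℕ → Bool) : ℕ → List Bool
  | 0 => []
  | n + 1 => prefYFn y n ++ [y n]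

lemma prefYFn_length (y : ℕ → Bool) : ∀ n, (prefYFn y n).length = n := by
  intro n
  induction n with
  | zero => rfl
  | succ n ih => simp [prefYFn, ih]

lemma prefYFn_getD (y : ℕ → Bool) : ∀ n, ∀ i < n, (prefYFn y n).getD i false = y i := by
  intro n
  induction n with
  | zero => intro i hi; omega
  | succ n ih =>
    intro i hi
    rcases Nat.lt_succ_iff_lt_or_eq.mp hi with hi' | rfl
    · show ((prefYFn y n) ++ [y n]).getD i false = y i
      rw [List.getD_append _ _ _ _ (by rw [prefYFn_length]; exact hi')]
      exact ih i hi'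
    · show ((prefYFn y i) ++ [y i]).getD i false = y i
      rw [List.getD_append_right _ _ _ _ (le_of_eq (prefYFn_length y i))]
      rw [prefYFn_length, Nat.sub_self]
      simp

lemma computable_prefYFn (y : ℕ → Bool) (hcomp : Computable y) :
    Computable (prefYFn y) := by
  have h' : Computable (fun q : ℕ × (ℕ × List Bool) => q.2.2 ++ [y q.2.1]) :=
    (Primrec.list_append.to_comp).comp (Computable.snd.comp Computable.snd)
      ((Primrec.list_cons.to_comp).comp (hcomp.comp (Computable.fst.comp Computable.snd))
        (Computable.const []))
  have hrec := Computable.nat_rec (f := fun n : ℕ => n) (g := fun _ : ℕ => ([] : List Bool))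
    (h := fun (_ : ℕ) (p : ℕ × List Bool) => p.2 ++ [y p.1])
    Computable.id (Computable.const []) h'.to₂
  apply hrec.of_eq
  intro n
  induction n with
  | zero => rfl
  | succ n ih => exact congrArg (fun l : List Bool => l ++ [y n]) ih

lemma computable_extFn (y : ℕ → Bool) (hcomp : Computable y) : Computable (extFn y) := by
  have hF2 : Primrec₂ (fun (ys t : List Bool) =>
      (List.range t.length).filterMap fun i =>
        if ys.getD i false = true then some (t.getD i false) else none) := by
    apply Primrec.listFilterMap
      (Primrec.list_range.comp (Primrec.list_length.comp Primrec.snd))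
    have heq : PrimrecRel (@Eq Bool) := Primrec.eq
    apply Primrec.ite
    · exact heq.comp
        (Primrec₂.comp (f := fun (l : List Bool) (n : ℕ) => l.getD n false)
          (Primrec.list_getD false) (Primrec.fst.comp Primrec.fst) Primrec.snd)
        (Primrec.const true)
    · exact Primrec.option_some.comp
        (Primrec₂.comp (f := fun (l : List Bool) (n : ℕ) => l.getD n false)
          (Primrec.list_getD false) (Primrec.snd.comp Primrec.fst) Primrec.snd)
    · exact Primrec.const none
  have hc := hF2.to_comp.comp
    ((computable_prefYFn y hcomp).comp Primrec.list_length.to_comp)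
    (Computable.id (α := List Bool))
  apply hc.of_eq
  intro t
  apply List.filterMap_congr
  intro i hi
  simp only [id_eq] at hi ⊢
  rw [List.mem_range] at hi
  rw [prefYFn_getD y t.length i hi]

end SelectionAux

open SelectionAux in
/-- Selection by a computable sequence preserves Martin-Löf randomness with respect
to the uniform measure. -/
theorem selection_preserves_randomness
    (lam : Measure (ℕ → Bool)) [IsProbabilityMeasure lam]
    (hlam : ∀ s : List Bool, lam (cyl s) = (2 : ℝ≥0∞)⁻¹ ^ s.length)
    (y : ℕ → Bool) (hcomp : Computable y) (hy : {i | y i = true}.Infinite)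
    (x : ℕ → Bool) (hx : MLRandom lam x) :
    MLRandom lam (selSeq x y) := by
  intro U hU
  obtain ⟨⟨f, hf, hfU⟩, hmono, hsize⟩ := hU
  have hpy : {i | (fun i => y i = true) i}.Infinite := hy
  -- The pulled-back test
  set V : Set (ℕ × List Bool) := {a | (a.1, extFn y a.2) ∈ U} with hV
  have hmemV : ∀ a : ℕ × List Bool, a ∈ V ↔ (a.1, extFn y a.2) ∈ U := fun a => Iff.rfl
  -- key: levels of V are preimages of levels of U under selection
  have hkey : ∀ n, lvl V n = (fun z => selSeq z y) ⁻¹' lvl U n := by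
    intro n
    ext z
    simp only [lvl, Set.mem_iUnion, Set.mem_preimage, Set.mem_setOf_eq, exists_prop]
    constructor
    · rintro ⟨t, htV, hzt⟩
      rw [hmemV] at htV
      refine ⟨extFn y t, htV, ?_⟩
      intro j hj
      rw [extFn_length] at hj
      have hnth : Nat.nth (fun i => y i = true) j < t.length := Nat.nth_lt_of_lt_count hj
      rw [extFn_getD y t hj]
      rw [← hzt _ hnth]
      rfl
    · rintro ⟨s, hsU, hzs⟩
      rcases Nat.eq_zero_or_pos s.length with hs0 | hspos
      · refine ⟨[], ?_, by intro i hi; simp at hi⟩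
        rw [hmemV]
        have hse : extFn y ([] : List Bool) = s := by
          have hnil := List.length_eq_zero_iff.mp hs0
          subst hnil
          rfl
        rw [hse]
        exact hsU
      · obtain ⟨k', hk'⟩ : ∃ k', s.length = k' + 1 := ⟨s.length - 1, by omega⟩
        have hcount : Nat.count (fun i => y i = true) (Nat.nth (fun i => y i = true) k' + 1) =
            k' + 1 := Nat.count_nth_succ_of_infinite hpy k'
        set N := Nat.nth (fun i => y i = true) k' + 1 with hN
        set t := List.ofFn (fun i : Fin N => z i) with ht
        have htlen : t.length = N := by simp [ht, hN]
        have hext : extFn y t = s := by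
          apply List.ext_getElem
          · rw [extFn_length, htlen, hcount, hk']
          · intro j h1 h2
            have hjk : j < k' + 1 := by
              rw [extFn_length, htlen, hcount] at h1
              exact h1
            have hjc : j < Nat.count (fun i => y i = true) t.length := by
              rw [htlen, hcount]
              exact hjk
            have egetD : (extFn y t).getD j false =
                t.getD (Nat.nth (fun i => y i = true) j) false := extFn_getD y t hjc
            rw [List.getD_eq_getElem _ _ h1] at egetD
            have hnth : Nat.nth (fun i => y i = true) j < N := by
              rcases Nat.lt_succ_iff_lt_or_eq.mp hjk with hlt | rfl
              · exact lt_trans ((Nat.nth_lt_nth hpy).mpr hlt) (Nat.lt_succ_self _)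
              · exact Nat.lt_succ_self _
            have ht' : t.getD (Nat.nth (fun i => y i = true) j) false =
                z (Nat.nth (fun i => y i = true) j) := by
              rw [ht, getD_ofFn _ hnth]
            have hz : selSeq z y j = s.getD j false := hzs j (by rw [hk']; exact hjk)
            rw [List.getD_eq_getElem _ _ h2] at hz
            rw [egetD, ht', ← hz]
            rfl
        refine ⟨t, ?_, ?_⟩
        · rw [hmemV]
          show ((n, t).1, extFn y t) ∈ U
          rw [hext]
          exact hsU
        · rw [ht]
          exact self_mem_cyl_ofFn z N
  -- V is a Martin-Löf test
  have hVtest : MLTest lam V := by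
    refine ⟨⟨fun a => f (a.1, extFn y a.2), ?_, fun a => hfU _⟩, ?_, ?_⟩
    · exact hf.comp (Computable.pair Computable.fst
        ((computable_extFn y hcomp).comp Computable.snd))
    · intro n
      rw [hkey n, hkey (n + 1)]
      exact Set.preimage_mono (hmono n)
    · intro n
      have hmeaslvl : MeasurableSet (lvl U n) :=
        MeasurableSet.biUnion (Set.to_countable _) (fun s _ => measurableSet_cyl s)
      rw [hkey n, ← Measure.map_apply (measurable_sel y) hmeaslvl,
        map_sel lam hlam y hy]
      exact hsize n
  obtain ⟨n, hn⟩ := hx V hVtest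
  refine ⟨n, ?_⟩
  rw [hkey n] at hn
  exact hn
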